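/- Existence and uniqueness of the symmetric Sinkhorn potential: assume the kernel matrix K = (exp(−c_{ij}/2))_{i,j} is positive definite. Then for every α ∈ △^d there exists a unique f ∈ ℝ^d satisfying the symmetric fixed-point equation −f = T(−f, α), i.e. f_i = 2 log Σ_{j=1}^d α_j exp(−(f_j + c_{ij})/2) for all i ∈ [d]. -/

import Mathlib

open Finset Real Filter

noncomputable section

/-- The probability simplex in `ℝ^d`. -/
def simplexS (d : ℕ) : Set (Fin d → ℝ) := stdSimplex ℝ (Fin d)


open scoped Classical

/-- `Φ_C(α,f) = Σ_{i,j} α_i α_j exp(-(f_i + f_j + c_{ij})/2)`. -/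
def Phi {d : ℕ} (C : Matrix (Fin d) (Fin d) ℝ) (α f : Fin d → ℝ) : ℝ :=
  ∑ i, ∑ j, α i * α j * Real.exp (-(f i + f j + C i j) / 2)

/-- The geometric log-sum-exp `Ω_C^*(f) = -log min_{α ∈ △^d} Φ_C(α, f)`. -/
def OmegaStar {d : ℕ} (C : Matrix (Fin d) (Fin d) ℝ) (f : Fin d → ℝ) : ℝ :=
  -Real.log (sInf ((fun α => Phi C α f) '' simplexS d))

/-- The geometric softmax: the (unique, when the kernel is positive definite) minimizer of
`Φ_C(·, f)` over the simplex. -/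
def gsoftmax {d : ℕ} (C : Matrix (Fin d) (Fin d) ℝ) (f : Fin d → ℝ) : Fin d → ℝ :=
  if h : ∃ α ∈ simplexS d, IsMinOn (fun β => Phi C β f) (simplexS d) α
  then h.choose else fun _ => 0

/-- The soft C-transform `T(f,α)_i = -2 log Σ_j α_j exp((f_j - c_{ij})/2)`. -/
def Tsoft {d : ℕ} (C : Matrix (Fin d) (Fin d) ℝ) (f α : Fin d → ℝ) : Fin d → ℝ :=
  fun i => -2 * Real.log (∑ j, α j * Real.exp ((f j - C i j) / 2))

/-- `f` is the symmetric Sinkhorn potential of `α`: `-f = T(-f, α)`. -/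
def IsSinkhornPotential {d : ℕ} (C : Matrix (Fin d) (Fin d) ℝ) (α f : Fin d → ℝ) : Prop :=
  -f = Tsoft C (-f) α

/-- The symmetric Sinkhorn potential `∇Ω(α)`: the (unique, when the kernel is positive
definite) `f` with `-f = T(-f, α)`. -/
def gradOmega {d : ℕ} (C : Matrix (Fin d) (Fin d) ℝ) (α : Fin d → ℝ) : Fin d → ℝ :=
  if h : ∃ f : Fin d → ℝ, IsSinkhornPotential C α f then h.choose else fun _ => 0

/-- The extrapolation `f^E = -T(-(f - Ω_C^*(f)·1), g-softmax(f)) + Ω_C^*(f)·1`. -/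
def extrap {d : ℕ} (C : Matrix (Fin d) (Fin d) ℝ) (f : Fin d → ℝ) : Fin d → ℝ :=
  fun i => -(Tsoft C (fun j => -(f j - OmegaStar C f)) (gsoftmax C f) i) + OmegaStar C f

/-- The kernel matrix `K = (exp(-c_{ij}/2))_{ij}`. -/
def kernelK {d : ℕ} (C : Matrix (Fin d) (Fin d) ℝ) : Matrix (Fin d) (Fin d) ℝ :=
  Matrix.of fun i j => Real.exp (-(C i j) / 2)


def Gfun {d : ℕ} (C : Matrix (Fin d) (Fin d) ℝ) (α : Fin d → ℝ) (u : Fin d → ℝ) : ℝ :=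
  (∑ j, ∑ k, α j * α k * Real.exp (-C j k / 2) * Real.exp (u j + u k)) / 2
    - ∑ j, α j * u j + ∑ j, (if α j = 0 then (u j) ^ 2 else 0)

lemma Gfun_continuous {d : ℕ} (C : Matrix (Fin d) (Fin d) ℝ) (α : Fin d → ℝ) :
    Continuous (Gfun C α) := by
  unfold Gfun
  apply Continuous.add
  · apply Continuous.sub
    · apply Continuous.div_const
      apply continuous_finset_sum
      intro j _
      apply continuous_finset_sum
      intro k _
      exact continuous_const.mul (((continuous_apply j).add (continuous_apply k)).rexp)
    · exact continuous_finset_sum _ fun j _ => continuous_const.mul (continuous_apply j)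
  · apply continuous_finset_sum
    intro j _
    split_ifs
    · exact ((continuous_apply j).pow 2)
    · exact continuous_const

lemma Gfun_bound {d : ℕ} (C : Matrix (Fin d) (Fin d) ℝ) (α : Fin d → ℝ)
    (hCdiag : ∀ i, C i i = 0) (hα0 : ∀ j, 0 ≤ α j) (hα1 : ∑ j, α j = 1)
    (hsupp : (Finset.univ.filter (fun j => α j ≠ 0)).Nonempty)
    (a : ℝ) (ha : 0 < a) (ha1 : a ≤ 1)
    (hale : ∀ j, α j ≠ 0 → a ≤ α j)
    (c' : ℝ) (hc' : 0 ≤ c') :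
    ∀ u : Fin d → ℝ, Gfun C α u ≤ c' →
      ∀ j, |u j| ≤ max (max (Real.log (2 * (c' + 1) / a ^ 2))
        ((c' + Real.log (2 * (c' + 1) / a ^ 2)) / a)) (c' + Real.log (2 * (c' + 1) / a ^ 2) + 1) := by
  intro u hu
  set B₁ : ℝ := Real.log (2 * (c' + 1) / a ^ 2) with hB₁def
  have hB₁ : 0 ≤ B₁ := by
    apply Real.log_nonneg
    rw [le_div_iff₀ (by positivity)]
    nlinarith
  -- the max of u over the support
  obtain ⟨j₀, hj₀mem, hj₀⟩ := Finset.exists_mem_eq_sup' hsupp u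
  set m : ℝ := (Finset.univ.filter (fun j => α j ≠ 0)).sup' hsupp u with hmdef
  have hj₀ne : α j₀ ≠ 0 := (Finset.mem_filter.mp hj₀mem).2
  have hum : ∀ k, α k ≠ 0 → u k ≤ m := fun k hk =>
    Finset.le_sup' u (Finset.mem_filter.mpr ⟨Finset.mem_univ _, hk⟩)
  have hsumle : ∑ k, α k * u k ≤ m := by
    calc ∑ k, α k * u k ≤ ∑ k, α k * m := by
          apply Finset.sum_le_sum
          intro k _
          by_cases hk : α k = 0
          · simp [hk]
          · exact mul_le_mul_of_nonneg_left (hum k hk) (hα0 k)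
      _ = m := by rw [← Finset.sum_mul, hα1, one_mul]
  have hqnn : ∀ (s : Finset (Fin d)) (v : Fin d → ℝ),
      (0:ℝ) ≤ ∑ j ∈ s, ∑ k, α j * α k * Real.exp (-C j k / 2) * Real.exp (v j + v k) := by
    intro s v
    apply Finset.sum_nonneg; intro j _
    apply Finset.sum_nonneg; intro k _
    have := hα0 j; have := hα0 k
    positivity
  have hpen : ∀ v : Fin d → ℝ, (0:ℝ) ≤ ∑ j, (if α j = 0 then (v j) ^ 2 else 0) := by
    intro v
    apply Finset.sum_nonneg; intro j _
    split_ifs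
    · positivity
    · exact le_refl 0
  -- lower bound on Gfun via the largest coordinate on the support
  have hGlb : a ^ 2 * Real.exp (2 * m) / 2 - m ≤ Gfun C α u := by
    have hsingle : α j₀ * α j₀ * Real.exp (-C j₀ j₀ / 2) * Real.exp (u j₀ + u j₀)
        ≤ ∑ j, ∑ k, α j * α k * Real.exp (-C j k / 2) * Real.exp (u j + u k) := by
      have h1 : α j₀ * α j₀ * Real.exp (-C j₀ j₀ / 2) * Real.exp (u j₀ + u j₀)
          ≤ ∑ k, α j₀ * α k * Real.exp (-C j₀ k / 2) * Real.exp (u j₀ + u k) := by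
        apply Finset.single_le_sum (f := fun k => α j₀ * α k * Real.exp (-C j₀ k / 2)
          * Real.exp (u j₀ + u k)) (fun k _ => by have := hα0 j₀; have := hα0 k; positivity)
          (Finset.mem_univ j₀)
      refine h1.trans ?_
      apply Finset.single_le_sum (f := fun j => ∑ k, α j * α k * Real.exp (-C j k / 2)
        * Real.exp (u j + u k)) (fun j _ => ?_) (Finset.mem_univ j₀)
      apply Finset.sum_nonneg; intro k _
      have := hα0 j; have := hα0 k; positivity
    have hval : α j₀ * α j₀ * Real.exp (-C j₀ j₀ / 2) * Real.exp (u j₀ + u j₀)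
        = α j₀ ^ 2 * Real.exp (2 * m) := by
      rw [hCdiag j₀, ← hj₀]
      simp [Real.exp_zero]
      ring_nf
    have haj₀ : a ≤ α j₀ := hale j₀ hj₀ne
    have h2 : a ^ 2 * Real.exp (2 * m) ≤ α j₀ ^ 2 * Real.exp (2 * m) := by
      have h2' : a * a ≤ α j₀ * α j₀ := mul_le_mul haj₀ haj₀ ha.le (hα0 j₀)
      have := Real.exp_pos (2 * m)
      nlinarith
    unfold Gfun
    have := hpen u
    nlinarith [hsumle, hsingle, hval]
  have hm : m ≤ B₁ := by
    rcases le_or_gt m 0 with h | h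
    · linarith
    · have h1 : (1 : ℝ) + m ≤ Real.exp m := by linarith [Real.add_one_le_exp m]
      have he : Real.exp m * (1 + m) ≤ Real.exp (2 * m) := by
        have h2 : Real.exp m * (1 + m) ≤ Real.exp m * Real.exp m := by
          nlinarith [Real.exp_pos m]
        calc Real.exp m * (1 + m) ≤ Real.exp m * Real.exp m := h2
          _ = Real.exp (2 * m) := by rw [← Real.exp_add]; ring_nf
      have h5 : a ^ 2 * Real.exp m * (1 + m) ≤ 2 * (c' + 1) * (1 + m) := by
        nlinarith [hGlb, hu]
      have h6 := le_of_mul_le_mul_right h5 (by linarith : (0:ℝ) < 1 + m)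
      have h4 : Real.exp m ≤ 2 * (c' + 1) / a ^ 2 := by
        rw [le_div_iff₀ (by positivity)]
        nlinarith
      exact (Real.le_log_iff_exp_le (by positivity)).2 h4
  -- now the per-coordinate bounds
  intro j
  by_cases hj : α j = 0
  · have hpj : (u j) ^ 2 ≤ ∑ k, (if α k = 0 then (u k) ^ 2 else 0) := by
      have h := Finset.single_le_sum (f := fun k => if α k = 0 then (u k) ^ 2 else 0)
        (fun k _ => by by_cases h : α k = 0 <;> simp [h] <;> positivity) (Finset.mem_univ j)
      simpa [hj] using h
    have h7 : (u j) ^ 2 - m ≤ Gfun C α u := by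
      unfold Gfun
      linarith [hqnn Finset.univ u, hsumle, hpj]
    have h8 : (u j) ^ 2 ≤ c' + B₁ := by linarith
    have habs : |u j| ≤ c' + B₁ + 1 := by
      nlinarith [sq_abs (u j), abs_nonneg (u j)]
    exact habs.trans (le_max_right _ _)
  · have hup : u j ≤ B₁ := (hum j hj).trans hm
    have herase : ∑ k ∈ Finset.univ.erase j, α k * u k ≤ B₁ := by
      calc ∑ k ∈ Finset.univ.erase j, α k * u k
          ≤ ∑ k ∈ Finset.univ.erase j, α k * B₁ := by
            apply Finset.sum_le_sum
            intro k _
            by_cases hk : α k = 0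
            · simp [hk]
            · exact mul_le_mul_of_nonneg_left ((hum k hk).trans hm) (hα0 k)
        _ = (∑ k ∈ Finset.univ.erase j, α k) * B₁ := (Finset.sum_mul _ _ _).symm
        _ ≤ 1 * B₁ := by
            apply mul_le_mul_of_nonneg_right _ hB₁
            rw [← hα1]
            exact Finset.sum_le_sum_of_subset_of_nonneg (Finset.erase_subset _ _)
              (fun k _ _ => hα0 k)
        _ = B₁ := one_mul _
    have hsplit : α j * u j + ∑ k ∈ Finset.univ.erase j, α k * u k = ∑ k, α k * u k :=
      Finset.add_sum_erase Finset.univ (fun k => α k * u k) (Finset.mem_univ j)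
    have hGl2 : -(α j * u j) - B₁ ≤ Gfun C α u := by
      unfold Gfun
      linarith [hqnn Finset.univ u, hpen u, herase, hsplit]
    have hkey : -(α j * u j) ≤ c' + B₁ := by linarith
    have haj : a ≤ α j := hale j hj
    have hlow : -u j ≤ (c' + B₁) / a := by
      rcases le_or_gt (-u j) 0 with h | h
      · exact h.trans (by positivity)
      · rw [le_div_iff₀ ha]
        nlinarith [mul_le_mul_of_nonneg_left haj h.le]
    have : |u j| ≤ max B₁ ((c' + B₁) / a) := by
      rw [abs_le]
      constructor
      · have := le_max_right B₁ ((c' + B₁) / a)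
        linarith
      · exact hup.trans (le_max_left _ _)
    exact this.trans (le_max_left _ _)

lemma exists_stationary {d : ℕ} (C : Matrix (Fin d) (Fin d) ℝ) (hCsym : C.IsSymm)
    (hCdiag : ∀ i, C i i = 0) (α : Fin d → ℝ) (hα0 : ∀ j, 0 ≤ α j) (hα1 : ∑ j, α j = 1) :
    ∃ u : Fin d → ℝ, ∀ i, α i ≠ 0 →
      Real.exp (u i) * (∑ k, α k * Real.exp (-C i k / 2) * Real.exp (u k)) = 1 := by
  classical
  -- support is nonempty
  have hsupp : (Finset.univ.filter (fun j => α j ≠ 0)).Nonempty := by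
    obtain ⟨j, -, hj⟩ := Finset.exists_ne_zero_of_sum_ne_zero
      (by rw [hα1]; exact one_ne_zero : ∑ j, α j ≠ 0)
    exact ⟨j, Finset.mem_filter.mpr ⟨Finset.mem_univ _, hj⟩⟩
  set a : ℝ := (Finset.univ.filter (fun j => α j ≠ 0)).inf' hsupp α with hadef
  obtain ⟨j₁, hj₁mem, hj₁⟩ := Finset.exists_mem_eq_inf' hsupp α
  have hj₁ne : α j₁ ≠ 0 := (Finset.mem_filter.mp hj₁mem).2
  have ha : 0 < a := by
    rw [hadef, hj₁]
    exact lt_of_le_of_ne (hα0 j₁) (Ne.symm hj₁ne)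
  have ha1 : a ≤ 1 := by
    rw [hadef, hj₁, ← hα1]
    exact Finset.single_le_sum (fun k _ => hα0 k) (Finset.mem_univ j₁)
  have hale : ∀ j, α j ≠ 0 → a ≤ α j := fun j hj =>
    Finset.inf'_le α (Finset.mem_filter.mpr ⟨Finset.mem_univ _, hj⟩)
  set c' : ℝ := max (Gfun C α 0) 0 with hc'def
  have hc' : 0 ≤ c' := le_max_right _ _
  set B₁ : ℝ := Real.log (2 * (c' + 1) / a ^ 2) with hB₁def
  have hB₁ : 0 ≤ B₁ := by
    apply Real.log_nonneg
    rw [le_div_iff₀ (by positivity)]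
    nlinarith
  set R : ℝ := max (max B₁ ((c' + B₁) / a)) (c' + B₁ + 1) with hRdef
  have hR : 0 ≤ R := le_trans (by linarith) (le_max_right _ _)
  -- a minimizer on the closed ball is a global minimizer
  obtain ⟨u, humem, humin⟩ := (isCompact_closedBall (0 : Fin d → ℝ) R).exists_isMinOn
    ⟨0, Metric.mem_closedBall_self hR⟩ (Gfun_continuous C α).continuousOn
  have hglobal : ∀ w, Gfun C α u ≤ Gfun C α w := by
    intro w
    rcases le_or_gt ‖w‖ R with h | h
    · exact isMinOn_iff.mp humin w (by simpa [Metric.mem_closedBall, dist_zero_right] using h)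
    · have h0 : Gfun C α u ≤ Gfun C α 0 :=
        isMinOn_iff.mp humin 0 (Metric.mem_closedBall_self hR)
      by_contra hcon
      push_neg at hcon
      have hw : Gfun C α w ≤ c' := le_trans hcon.le (h0.trans (le_max_left _ _))
      have hb := Gfun_bound C α hCdiag hα0 hα1 hsupp a ha ha1 hale c' hc' w hw
      have : ‖w‖ ≤ R := by
        rw [pi_norm_le_iff_of_nonneg hR]
        intro j
        rw [Real.norm_eq_abs]
        exact hb j
      linarith
  refine ⟨u, ?_⟩
  intro i hi
  set v : Fin d → ℝ := fun j => if j = i then (1:ℝ) else 0 with hv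
  -- derivative of t ↦ Gfun (u + t • v) at 0
  set D : ℝ := (∑ j, ∑ k, (α j * α k * Real.exp (-C j k / 2) * Real.exp (u j + u k)) * (v j + v k)) / 2
      - ∑ j, α j * v j + ∑ j, (if α j = 0 then 2 * u j * v j else 0) with hDdef
  have hrw : (fun t : ℝ => Gfun C α (u + t • v)) = fun t =>
      (∑ j, ∑ k, α j * α k * Real.exp (-C j k / 2)
        * Real.exp ((u j + t * v j) + (u k + t * v k))) / 2
      - ∑ j, α j * (u j + t * v j) + ∑ j, (if α j = 0 then (u j + t * v j) ^ 2 else 0) := by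
    funext t
    simp [Gfun]
  have hexp : ∀ j k : Fin d, HasDerivAt (fun t : ℝ => α j * α k * Real.exp (-C j k / 2)
      * Real.exp ((u j + t * v j) + (u k + t * v k)))
      ((α j * α k * Real.exp (-C j k / 2) * Real.exp (u j + u k)) * (v j + v k)) 0 := by
    intro j k
    have h1 : HasDerivAt (fun t : ℝ => u j + t * v j) (v j) 0 := by
      simpa using ((hasDerivAt_id (0:ℝ)).mul_const (v j)).const_add (u j)
    have h2 : HasDerivAt (fun t : ℝ => u k + t * v k) (v k) 0 := by
      simpa using ((hasDerivAt_id (0:ℝ)).mul_const (v k)).const_add (u k)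
    have := ((h1.add h2).exp).const_mul (α j * α k * Real.exp (-C j k / 2))
    refine this.congr_deriv ?_
    simp
    ring
  have hlin : ∀ j : Fin d, HasDerivAt (fun t : ℝ => α j * (u j + t * v j)) (α j * v j) 0 :=
    fun j => by
      simpa using (((hasDerivAt_id (0:ℝ)).mul_const (v j)).const_add (u j)).const_mul (α j)
  have hquad : ∀ j : Fin d, HasDerivAt (fun t : ℝ => if α j = 0 then (u j + t * v j) ^ 2 else 0)
      (if α j = 0 then 2 * u j * v j else 0) 0 := by
    intro j
    split_ifs with h
    · have h1 : HasDerivAt (fun t : ℝ => u j + t * v j) (v j) 0 := by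
        simpa using ((hasDerivAt_id (0:ℝ)).mul_const (v j)).const_add (u j)
      have := h1.pow 2
      norm_num at this
      exact this
    · exact hasDerivAt_const 0 0
  have hD : HasDerivAt (fun t : ℝ => Gfun C α (u + t • v)) D 0 := by
    rw [hrw, hDdef]
    exact (((HasDerivAt.fun_sum (fun j _ => HasDerivAt.fun_sum (fun k _ => hexp j k))).div_const 2).sub
      (HasDerivAt.fun_sum fun j _ => hlin j)).add (HasDerivAt.fun_sum fun j _ => hquad j)
  have hmin0 : IsLocalMin (fun t : ℝ => Gfun C α (u + t • v)) 0 :=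
    Filter.Eventually.of_forall fun t => by simpa using hglobal (u + t • v)
  have hD0 : D = 0 := hmin0.hasDerivAt_eq_zero hD
  -- simplify the three pieces of D
  set t : Fin d → Fin d → ℝ :=
    fun j k => α j * α k * Real.exp (-C j k / 2) * Real.exp (u j + u k) with htdef
  have hsym : ∀ j k, t j k = t k j := by
    intro j k
    rw [htdef]
    simp only []
    rw [hCsym.apply k j, add_comm (u j) (u k)]
    ring
  have hA : ∑ j, ∑ k, t j k * v j = ∑ k, t i k := by
    have h1 : ∀ j, ∑ k, t j k * v j = (if j = i then ∑ k, t j k else 0) := by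
      intro j
      by_cases hji : j = i
      · simp [hv, hji]
      · simp [hv, hji]
    rw [Finset.sum_congr rfl (fun j _ => h1 j), Finset.sum_ite_eq' Finset.univ i
      (fun j => ∑ k, t j k)]
    simp
  have hB : ∑ j, ∑ k, t j k * v k = ∑ k, t i k := by
    have h1 : ∀ j, ∑ k, t j k * v k = t j i := by
      intro j
      rw [show (∑ k, t j k * v k) = ∑ k, (if k = i then t j k else 0) from
        Finset.sum_congr rfl fun k _ => by by_cases hki : k = i <;> simp [hv, hki]]
      rw [Finset.sum_ite_eq' Finset.univ i (fun k => t j k)]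
      simp
    rw [Finset.sum_congr rfl (fun j _ => h1 j)]
    exact Finset.sum_congr rfl fun j _ => hsym j i
  have hT1 : ∑ j, ∑ k, t j k * (v j + v k) = 2 * ∑ k, t i k := by
    have : ∀ j, ∑ k, t j k * (v j + v k) = (∑ k, t j k * v j) + (∑ k, t j k * v k) := by
      intro j
      rw [← Finset.sum_add_distrib]
      exact Finset.sum_congr rfl fun k _ => by ring
    rw [Finset.sum_congr rfl (fun j _ => this j), Finset.sum_add_distrib, hA, hB]
    ring
  have hL : ∑ j, α j * v j = α i := by
    rw [show (∑ j, α j * v j) = ∑ j, (if j = i then α j else 0) from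
      Finset.sum_congr rfl fun j _ => by by_cases hji : j = i <;> simp [hv, hji]]
    rw [Finset.sum_ite_eq' Finset.univ i α]
    simp
  have hP : ∑ j, (if α j = 0 then 2 * u j * v j else 0) = 0 := by
    apply Finset.sum_eq_zero
    intro j _
    by_cases hji : j = i
    · subst hji; simp [hi]
    · simp [hv, hji]
  have hS : ∑ k, t i k = α i := by
    have := hD0
    rw [hDdef, hT1, hL, hP] at this
    linarith
  have hSX : ∑ k, t i k
      = α i * (Real.exp (u i) * ∑ k, α k * Real.exp (-C i k / 2) * Real.exp (u k)) := by
    simp only [Finset.mul_sum]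
    apply Finset.sum_congr rfl
    intro k _
    rw [htdef]
    simp only []
    rw [Real.exp_add]
    ring
  have : α i * (Real.exp (u i) * ∑ k, α k * Real.exp (-C i k / 2) * Real.exp (u k))
      = α i * 1 := by
    rw [mul_one, ← hSX]
    exact hS
  exact mul_left_cancel₀ hi this

/-- Existence and uniqueness of the symmetric Sinkhorn potential: when the kernel
`K = (exp(-c_{ij}/2))` is positive definite, for every `α ∈ △^d` there exists a unique
`f ∈ ℝ^d` with `-f = T(-f, α)`, i.e. `f_i = 2 log Σ_j α_j exp(-(f_j + c_{ij})/2)` for all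
`i`. -/
theorem sinkhorn_potential_exists_unique (d : ℕ) (hd : 1 ≤ d)
    (C : Matrix (Fin d) (Fin d) ℝ) (hCsym : C.IsSymm) (hCdiag : ∀ i, C i i = 0)
    (hK : (kernelK C).PosDef) (α : Fin d → ℝ) (hα : α ∈ simplexS d) :
    ∃! f : Fin d → ℝ,
      ∀ i, f i = 2 * Real.log (∑ j, α j * Real.exp (-(f j + C i j) / 2)) := by
  obtain ⟨hα0, hα1⟩ := hα
  have hjex : ∃ j, α j ≠ 0 := by
    obtain ⟨j, -, hj⟩ := Finset.exists_ne_zero_of_sum_ne_zero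
      (by rw [hα1]; exact one_ne_zero : ∑ j, α j ≠ 0)
    exact ⟨j, hj⟩
  have hSpos : ∀ (w : Fin d → ℝ) (i : Fin d),
      0 < ∑ j, α j * Real.exp (w j) * Real.exp (-C i j / 2) := by
    intro w i
    apply Finset.sum_pos'
    · intro j _
      have := hα0 j
      positivity
    · obtain ⟨j, hj⟩ := hjex
      refine ⟨j, Finset.mem_univ j, ?_⟩
      have h := lt_of_le_of_ne (hα0 j) (Ne.symm hj)
      positivity
  have hsum_eq : ∀ (f : Fin d → ℝ) (i : Fin d),
      (∑ j, α j * Real.exp (-(f j + C i j) / 2))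
        = ∑ j, (α j * Real.exp (-f j / 2)) * Real.exp (-C i j / 2) := by
    intro f i
    apply Finset.sum_congr rfl
    intro j _
    rw [show -(f j + C i j) / 2 = -f j / 2 + -C i j / 2 by ring, Real.exp_add]
    ring
  -- the sum appearing in the fixed-point equation is positive
  have hSpos' : ∀ (f : Fin d → ℝ) (i : Fin d),
      0 < ∑ j, (α j * Real.exp (-f j / 2)) * Real.exp (-C i j / 2) := by
    intro f i
    have := hSpos (fun j => -f j / 2) i
    simpa using this
  -- any solution satisfies exp (f i / 2) = ∑ j (α j exp (-f j/2)) exp(-C i j/2)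
  have hexp_eq : ∀ (f : Fin d → ℝ),
      (∀ i, f i = 2 * Real.log (∑ j, α j * Real.exp (-(f j + C i j) / 2))) →
      ∀ i, Real.exp (f i / 2)
        = ∑ j, (α j * Real.exp (-f j / 2)) * Real.exp (-C i j / 2) := by
    intro f hf i
    rw [hf i, hsum_eq f i,
      show 2 * Real.log (∑ j, (α j * Real.exp (-f j / 2)) * Real.exp (-C i j / 2)) / 2
        = Real.log (∑ j, (α j * Real.exp (-f j / 2)) * Real.exp (-C i j / 2)) by ring,
      Real.exp_log (hSpos' f i)]
  -- existence
  obtain ⟨u, hu⟩ := exists_stationary C hCsym hCdiag α hα0 hα1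
  set s : Fin d → ℝ := fun i => ∑ j, α j * Real.exp (u j) * Real.exp (-C i j / 2) with hsdef
  have hspos : ∀ i, 0 < s i := fun i => hSpos u i
  set f : Fin d → ℝ := fun i => 2 * Real.log (s i) with hfdef
  have hkey : ∀ j, α j ≠ 0 → Real.exp (-f j / 2) = Real.exp (u j) := by
    intro j hj
    have h1 : Real.exp (u j) * (∑ k, α k * Real.exp (-C j k / 2) * Real.exp (u k)) = 1 :=
      hu j hj
    have h2 : (∑ k, α k * Real.exp (-C j k / 2) * Real.exp (u k)) = s j := by
      rw [hsdef]
      exact Finset.sum_congr rfl fun k _ => by ring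
    rw [h2] at h1
    have h3 : s j = Real.exp (-u j) := by
      rw [Real.exp_neg]
      exact eq_inv_of_mul_eq_one_right h1
    rw [hfdef]
    simp only []
    rw [h3, Real.log_exp]
    congr 1
    ring
  have hfix : ∀ i, f i = 2 * Real.log (∑ j, α j * Real.exp (-(f j + C i j) / 2)) := by
    intro i
    rw [hsum_eq f i]
    have h4 : (∑ j, (α j * Real.exp (-f j / 2)) * Real.exp (-C i j / 2)) = s i := by
      rw [hsdef]
      apply Finset.sum_congr rfl
      intro j _
      by_cases hj : α j = 0
      · simp [hj]
      · rw [hkey j hj]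
    rw [h4]
  -- uniqueness
  have huniq : ∀ p q : Fin d → ℝ,
      (∀ i, p i = 2 * Real.log (∑ j, α j * Real.exp (-(p j + C i j) / 2))) →
      (∀ i, q i = 2 * Real.log (∑ j, α j * Real.exp (-(q j + C i j) / 2))) →
      p = q := by
    intro p q hp hq
    set x : Fin d → ℝ := fun j => α j * Real.exp (-p j / 2) with hxdef
    set y : Fin d → ℝ := fun j => α j * Real.exp (-q j / 2) with hydef
    have hxS : ∀ i, Real.exp (p i / 2) = ∑ j, x j * Real.exp (-C i j / 2) := hexp_eq p hp
    have hyS : ∀ i, Real.exp (q i / 2) = ∑ j, y j * Real.exp (-C i j / 2) := hexp_eq q hq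
    have hxy : x = y := by
      by_contra hne
      set z : Fin d → ℝ := fun j => x j - y j with hzdef
      have hz : z ≠ 0 := by
        intro h0
        apply hne
        funext j
        have := congrFun h0 j
        simpa [hzdef, sub_eq_zero] using this
      have hpos := (Matrix.posDef_iff_dotProduct_mulVec.mp hK).2 hz
      have hform : dotProduct (star z) ((kernelK C).mulVec z)
          = ∑ i, (x i - y i) * (Real.exp (p i / 2) - Real.exp (q i / 2)) := by
        simp only [dotProduct, Matrix.mulVec, kernelK, Matrix.of_apply,
          Pi.star_apply, star_trivial]
        apply Finset.sum_congr rfl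
        intro i _
        congr 1
        have hin : (∑ j, Real.exp (-C i j / 2) * (x j - y j))
            = (∑ j, x j * Real.exp (-C i j / 2)) - ∑ j, y j * Real.exp (-C i j / 2) := by
          rw [← Finset.sum_sub_distrib]
          exact Finset.sum_congr rfl fun j _ => by ring
        rw [hxS i, hyS i, ← hin]
      have hnonpos : (∑ i, (x i - y i) * (Real.exp (p i / 2) - Real.exp (q i / 2))) ≤ 0 := by
        apply Finset.sum_nonpos
        intro i _
        have hzi : x i - y i = α i * (Real.exp (-p i / 2) - Real.exp (-q i / 2)) := by
          rw [hxdef, hydef]; ring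
        rw [hzi]
        rcases le_total (p i) (q i) with h | h
        · apply mul_nonpos_iff.mpr
          left
          constructor
          · apply mul_nonneg (hα0 i)
            have := Real.exp_le_exp.2 (show -q i / 2 ≤ -p i / 2 by linarith)
            linarith
          · have := Real.exp_le_exp.2 (show p i / 2 ≤ q i / 2 by linarith)
            linarith
        · apply mul_nonpos_iff.mpr
          right
          constructor
          · apply mul_nonpos_iff.mpr
            left
            refine ⟨hα0 i, ?_⟩
            have := Real.exp_le_exp.2 (show -p i / 2 ≤ -q i / 2 by linarith)
            linarith
          · have := Real.exp_le_exp.2 (show q i / 2 ≤ p i / 2 by linarith)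
            linarith
      rw [hform] at hpos
      linarith
    funext i
    have h5 : Real.exp (p i / 2) = Real.exp (q i / 2) := by
      rw [hxS i, hyS i, hxy]
    have := Real.exp_eq_exp.mp h5
    linarith
  exact ⟨f, hfix, fun g hg => huniq g f hg hfix⟩
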